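/- Let S and Y be finite alphabets, let (S,Y) have joint pmf P_{S,Y} with strictly positive marginals P_S and P_Y, and let α > 1. If the posterior satisfies P_{S|Y}(s|y) ≤ e^{ε_u}·P_S(s) for all s ∈ S and y ∈ Y (ε_u ≥ 0), then the Arimoto mutual information of order α, I_α^A(S;Y) = (α/(α-1)) · log( Σ_{y∈Y} P_Y(y)·‖P_{S|Y}(·|y)‖_α / ‖P_S‖_α ), satisfies I_α^A(S;Y) ≤ (α/(α-1))·ε_u, where ‖v‖_α = (Σ_s v(s)^α)^{1/α}. -/
import Mathlib


open Real BigOperators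

/-- Arimoto mutual information bound under a max-lift constraint. -/
theorem arimoto_mi_le {S Y : Type*} [Fintype S] [Fintype Y]
    (P : S → Y → ℝ) (hPnn : ∀ s y, 0 ≤ P s y) (hPsum : ∑ s, ∑ y, P s y = 1)
    (PS : S → ℝ) (PY : Y → ℝ)
    (hPS : ∀ s, PS s = ∑ y, P s y) (hPY : ∀ y, PY y = ∑ s, P s y)
    (hPSpos : ∀ s, 0 < PS s) (hPYpos : ∀ y, 0 < PY y)
    (α : ℝ) (hα : 1 < α)
    (εu : ℝ) (hεu : 0 ≤ εu)
    (hmax : ∀ s y, P s y / PY y ≤ Real.exp εu * PS s) :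
    (α / (α - 1)) *
        Real.log ((∑ y, PY y * (∑ s, (P s y / PY y) ^ α) ^ (1/α)) /
          (∑ s, PS s ^ α) ^ (1/α)) ≤
      (α / (α - 1)) * εu := by
  have hαpos : 0 < α := lt_trans one_pos hα
  have hαne : α ≠ 0 := ne_of_gt hαpos
  have hcoef : 0 ≤ α / (α - 1) := le_of_lt (div_pos hαpos (by linarith))
  -- sum of PY is 1
  have hsumPY : ∑ y, PY y = 1 := by
    simp only [hPY]
    rw [Finset.sum_comm]; exact hPsum
  -- nonempty Y
  have hYne : Nonempty Y := by
    by_contra h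
    simp only [not_nonempty_iff] at h
    rw [Finset.sum_of_isEmpty] at hsumPY
    norm_num at hsumPY
  set N : ℝ := (∑ s, PS s ^ α) ^ (1/α) with hN
  have hSsumpos : 0 < ∑ s, PS s ^ α := by
    have hSne : Nonempty S := by
      by_contra h
      simp only [not_nonempty_iff] at h
      norm_num [Finset.sum_of_isEmpty] at hsumPY
      have y : Y := Classical.arbitrary Y
      have := hPYpos y
      rw [hPY y, Finset.sum_of_isEmpty] at this
      exact lt_irrefl 0 this
    apply Finset.sum_pos
    · intro s _; exact Real.rpow_pos_of_pos (hPSpos s) α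
    · exact Finset.univ_nonempty
  have hNpos : 0 < N := Real.rpow_pos_of_pos hSsumpos _
  -- key bound for each y
  have hkey : ∀ y, (∑ s, (P s y / PY y) ^ α) ^ (1/α) ≤ Real.exp εu * N := by
    intro y
    have h1 : ∑ s, (P s y / PY y) ^ α ≤ Real.exp (α * εu) * ∑ s, PS s ^ α := by
      rw [Finset.mul_sum]
      apply Finset.sum_le_sum
      intro s _
      have h0 : 0 ≤ P s y / PY y := div_nonneg (hPnn s y) (le_of_lt (hPYpos y))
      calc (P s y / PY y) ^ α ≤ (Real.exp εu * PS s) ^ α :=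
            Real.rpow_le_rpow h0 (hmax s y) (le_of_lt hαpos)
        _ = (Real.exp εu) ^ α * PS s ^ α :=
            Real.mul_rpow (Real.exp_nonneg _) (le_of_lt (hPSpos s))
        _ = Real.exp (α * εu) * PS s ^ α := by
            rw [Real.rpow_def_of_pos (Real.exp_pos _), Real.log_exp, mul_comm εu α]
    calc (∑ s, (P s y / PY y) ^ α) ^ (1/α)
        ≤ (Real.exp (α * εu) * ∑ s, PS s ^ α) ^ (1/α) := by
          apply Real.rpow_le_rpow _ h1 (by positivity)
          apply Finset.sum_nonneg
          intro s _
          exact Real.rpow_nonneg (div_nonneg (hPnn s y) (le_of_lt (hPYpos y))) _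
      _ = (Real.exp (α * εu)) ^ (1/α) * N :=
          Real.mul_rpow (Real.exp_nonneg _) (le_of_lt hSsumpos)
      _ = Real.exp εu * N := by
          rw [Real.rpow_def_of_pos (Real.exp_pos _), Real.log_exp]
          congr 1
          congr 1
          field_simp
  -- numerator bound
  have hnum : (∑ y, PY y * (∑ s, (P s y / PY y) ^ α) ^ (1/α)) ≤ Real.exp εu * N := by
    calc (∑ y, PY y * (∑ s, (P s y / PY y) ^ α) ^ (1/α))
        ≤ ∑ y, PY y * (Real.exp εu * N) := by
          apply Finset.sum_le_sum
          intro y _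
          exact mul_le_mul_of_nonneg_left (hkey y) (le_of_lt (hPYpos y))
      _ = Real.exp εu * N := by
          rw [← Finset.sum_mul, hsumPY, one_mul]
  -- numerator positive
  have hnumpos : 0 < ∑ y, PY y * (∑ s, (P s y / PY y) ^ α) ^ (1/α) := by
    apply Finset.sum_pos
    · intro y _
      apply mul_pos (hPYpos y)
      apply Real.rpow_pos_of_pos
      apply Finset.sum_pos'
      · intro s _
        exact Real.rpow_nonneg (div_nonneg (hPnn s y) (le_of_lt (hPYpos y))) _
      · -- exists s with P s y > 0
        have hy : 0 < ∑ s, P s y := by rw [← hPY]; exact hPYpos y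
        obtain ⟨s, hs, hspos⟩ : ∃ s ∈ Finset.univ, 0 < P s y := by
          by_contra h
          push_neg at h
          have : ∑ s, P s y ≤ 0 := Finset.sum_nonpos (fun s hs => h s hs)
          linarith
        exact ⟨s, hs, Real.rpow_pos_of_pos (div_pos hspos (hPYpos y)) _⟩
    · exact Finset.univ_nonempty
  -- conclude
  apply mul_le_mul_of_nonneg_left _ hcoef
  rw [Real.log_le_iff_le_exp (div_pos hnumpos hNpos)]
  rw [div_le_iff₀ hNpos]
  exact hnum
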